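/- Let E be a real normed space and ξ : E → ℝ a convex Katětov function. Define N^ξ : E × ℝ → ℝ by N^ξ(a, α) = |α|·ξ(a/α) if α ≠ 0 and N^ξ(a, 0) = ‖a‖ (the pair (a, α) encodes the vector αx − a of E ⊕ ℝx, so that (a,α)+(b,β)=(a+b,α+β) and t·(a,α)=(ta,tα)). Then N^ξ is a seminorm on E × ℝ, i.e. N^ξ(t·v) = |t|·N^ξ(v) and N^ξ(v + w) ≤ N^ξ(v) + N^ξ(w) for all v, w ∈ E × ℝ and t ∈ ℝ, and its restriction to E × {0} is the norm of E. -/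

import Mathlib

/-- A function `ξ` on a metric space is *Katětov* if `|ξ x - ξ y| ≤ d(x,y)` and
`d(x,y) ≤ ξ x + ξ y` for all `x, y`. -/
def IsKatetov {X : Type*} [MetricSpace X] (ξ : X → ℝ) : Prop :=
  ∀ x y : X, |ξ x - ξ y| ≤ dist x y ∧ dist x y ≤ ξ x + ξ y

/-- The function `N^ξ` on `E × ℝ`, where `(a, α)` encodes the vector `αx - a` of `E ⊕ ℝx`:
`N^ξ (a, α) = |α| ξ(a/α)` for `α ≠ 0`, and `N^ξ (a, 0) = ‖a‖`. -/
noncomputable def katetovSeminorm {E : Type*} [NormedAddCommGroup E] [NormedSpace ℝ E]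
    (ξ : E → ℝ) (v : E × ℝ) : ℝ :=
  if v.2 = 0 then ‖v.1‖ else |v.2| * ξ (v.2⁻¹ • v.1)

section aux
variable {E : Type*} [NormedAddCommGroup E] [NormedSpace ℝ E] {ξ : E → ℝ}

omit [NormedSpace ℝ E] in
lemma kat_lip (hK : IsKatetov ξ) (x y : E) : ξ x ≤ ξ y + ‖x - y‖ := by
  have h := abs_le.mp (hK x y).1
  rw [dist_eq_norm] at h
  linarith [h.2]

omit [NormedSpace ℝ E] in
lemma kat_dist (hK : IsKatetov ξ) (x y : E) : ‖x - y‖ ≤ ξ x + ξ y := by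
  have := (hK x y).2; rwa [dist_eq_norm] at this

lemma keyA (hC : ConvexOn ℝ Set.univ ξ) {α β : ℝ} (hα : 0 < α) (hβ : 0 < β) (a b : E) :
    (α + β) * ξ ((α + β)⁻¹ • (a + b)) ≤ α * ξ (α⁻¹ • a) + β * ξ (β⁻¹ • b) := by
  have hγ : 0 < α + β := by linarith
  have h := hC.2 (Set.mem_univ (α⁻¹ • a)) (Set.mem_univ (β⁻¹ • b))
      (le_of_lt (div_pos hα hγ)) (le_of_lt (div_pos hβ hγ)) (by field_simp)
  have hcomb : (α / (α + β)) • (α⁻¹ • a) + (β / (α + β)) • (β⁻¹ • b)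
      = (α + β)⁻¹ • (a + b) := by
    match_scalars <;> field_simp <;> ring_nf
  rw [hcomb] at h
  have h2 := mul_le_mul_of_nonneg_left h (le_of_lt hγ)
  have hne : α + β ≠ 0 := ne_of_gt hγ
  have h3 : (α + β) * ((α / (α + β)) • ξ (α⁻¹ • a) + (β / (α + β)) • ξ (β⁻¹ • b))
      = α * ξ (α⁻¹ • a) + β * ξ (β⁻¹ • b) := by
    simp only [smul_eq_mul]
    field_simp
  rw [h3] at h2
  exact h2

lemma keyB (hK : IsKatetov ξ) {α β : ℝ} (hα : 0 < α) (hβ : β < 0) (hγ : 0 < α + β)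
    (a b : E) :
    (α + β) * ξ ((α + β)⁻¹ • (a + b)) ≤ α * ξ (α⁻¹ • a) + (-β) * ξ (β⁻¹ • b) := by
  have hγ' : (α + β) ≠ 0 := ne_of_gt hγ
  have hβ0 : β ≠ 0 := ne_of_lt hβ
  have hα0 : α ≠ 0 := ne_of_gt hα
  have hlip := kat_lip hK ((α + β)⁻¹ • (a + b)) (α⁻¹ • a)
  have hvec : (α + β)⁻¹ • (a + b) - α⁻¹ • a = (β / (α + β)) • (β⁻¹ • b - α⁻¹ • a) := by
    match_scalars <;> field_simp <;> ring_nf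
  have hnorm : ‖(α + β)⁻¹ • (a + b) - α⁻¹ • a‖ = (-β / (α + β)) * ‖β⁻¹ • b - α⁻¹ • a‖ := by
    rw [hvec, norm_smul, Real.norm_eq_abs, abs_div, abs_of_neg hβ, abs_of_pos hγ]
  have hd := kat_dist hK (β⁻¹ • b) (α⁻¹ • a)
  have h1 : (α + β) * ξ ((α + β)⁻¹ • (a + b))
      ≤ (α + β) * ξ (α⁻¹ • a) + (-β) * ‖β⁻¹ • b - α⁻¹ • a‖ := by
    have h := mul_le_mul_of_nonneg_left hlip (le_of_lt hγ)
    rw [hnorm] at h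
    have h4 : (α + β) * (ξ (α⁻¹ • a) + -β / (α + β) * ‖β⁻¹ • b - α⁻¹ • a‖)
        = (α + β) * ξ (α⁻¹ • a) + (-β) * ‖β⁻¹ • b - α⁻¹ • a‖ := by
      field_simp
    rw [h4] at h
    exact h
  nlinarith [hd, hβ]

lemma key (hK : IsKatetov ξ) (hC : ConvexOn ℝ Set.univ ξ) {α β : ℝ}
    (hα : α ≠ 0) (hβ : β ≠ 0) (hγ : α + β ≠ 0) (a b : E) :
    |α + β| * ξ ((α + β)⁻¹ • (a + b)) ≤ |α| * ξ (α⁻¹ • a) + |β| * ξ (β⁻¹ • b) := by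
  have main : ∀ (α β : ℝ), α ≠ 0 → β ≠ 0 → 0 < α + β → ∀ a b : E,
      |α + β| * ξ ((α + β)⁻¹ • (a + b)) ≤ |α| * ξ (α⁻¹ • a) + |β| * ξ (β⁻¹ • b) := by
    intro α β hα hβ hγ a b
    rcases lt_or_gt_of_ne hα with hαn | hαp
    · rcases lt_or_gt_of_ne hβ with hβn | hβp
      · linarith
      · have h := keyB hK hβp hαn (by linarith [hγ] : 0 < β + α) b a
        rw [add_comm b a, add_comm β α] at h
        rw [abs_of_pos hγ, abs_of_neg hαn, abs_of_pos hβp]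
        linarith
    · rcases lt_or_gt_of_ne hβ with hβn | hβp
      · have h := keyB hK hαp hβn hγ a b
        rw [abs_of_pos hγ, abs_of_pos hαp, abs_of_neg hβn]
        linarith
      · have h := keyA hC hαp hβp a b
        rw [abs_of_pos hγ, abs_of_pos hαp, abs_of_pos hβp]
        linarith
  rcases lt_or_gt_of_ne hγ with hn | hp
  · have h := main (-α) (-β) (neg_ne_zero.mpr hα) (neg_ne_zero.mpr hβ)
      (by linarith) (-a) (-b)
    have e1 : (-α + -β)⁻¹ • (-a + -b) = (α + β)⁻¹ • (a + b) := by
      rw [show (-α + -β) = -(α + β) by ring, show (-a + -b) = -(a + b) by module,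
        inv_neg, neg_smul, smul_neg, neg_neg]
    have e2 : (-α)⁻¹ • (-a : E) = α⁻¹ • a := by
      rw [inv_neg, neg_smul, smul_neg, neg_neg]
    have e3 : (-β)⁻¹ • (-b : E) = β⁻¹ • b := by
      rw [inv_neg, neg_smul, smul_neg, neg_neg]
    rw [e1, e2, e3, show (-α + -β) = -(α + β) by ring, abs_neg, abs_neg, abs_neg] at h
    exact h
  · exact main α β hα hβ hp a b

end aux

/-- If `ξ` is a convex Katětov function on a real normed space `E`, then `N^ξ` is a
seminorm on `E × ℝ` whose restriction to `E × {0}` is the norm of `E`. -/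
theorem katetovSeminorm_isSeminorm {E : Type*} [NormedAddCommGroup E] [NormedSpace ℝ E]
    (ξ : E → ℝ) (hK : IsKatetov ξ) (hC : ConvexOn ℝ Set.univ ξ) :
    (∀ (t : ℝ) (v : E × ℝ), katetovSeminorm ξ (t • v) = |t| * katetovSeminorm ξ v) ∧
    (∀ v w : E × ℝ, katetovSeminorm ξ (v + w) ≤ katetovSeminorm ξ v + katetovSeminorm ξ w) ∧
    (∀ a : E, katetovSeminorm ξ (a, 0) = ‖a‖) := by
  refine ⟨?_, ?_, ?_⟩
  · rintro t ⟨a, α⟩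
    by_cases ht : t = 0
    · simp [ht, katetovSeminorm]
    by_cases hα : α = 0
    · simp [katetovSeminorm, hα, ht, norm_smul, abs_mul]
    · have h2 : t * α ≠ 0 := mul_ne_zero ht hα
      simp only [katetovSeminorm, Prod.smul_fst, Prod.smul_snd, smul_eq_mul]
      rw [if_neg h2, if_neg hα]
      have : (t * α)⁻¹ • (t • a) = α⁻¹ • a := by
        rw [smul_smul]
        congr 1
        field_simp
      rw [this, abs_mul]
      ring
  · rintro ⟨a, α⟩ ⟨b, β⟩
    by_cases hα : α = 0
    · by_cases hβ : β = 0
      · simp [katetovSeminorm, hα, hβ]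
        exact norm_add_le a b
      · simp only [katetovSeminorm, Prod.fst_add, Prod.snd_add, hα, zero_add, if_true, eq_self_iff_true]
        rw [if_neg hβ, if_neg hβ]
        have hlip := kat_lip hK (β⁻¹ • (a + b)) (β⁻¹ • b)
        have hv : β⁻¹ • (a + b) - β⁻¹ • b = β⁻¹ • a := by module
        rw [hv, norm_smul, Real.norm_eq_abs] at hlip
        have hm := mul_le_mul_of_nonneg_left hlip (abs_nonneg β)
        have habs : |β| * (|β⁻¹| * ‖a‖) = ‖a‖ := by
          rw [abs_inv]
          field_simp
        nlinarith [abs_nonneg β]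
    · by_cases hβ : β = 0
      · simp only [katetovSeminorm, Prod.fst_add, Prod.snd_add, hβ, add_zero, if_true, eq_self_iff_true]
        rw [if_neg hα, if_neg hα]
        have hlip := kat_lip hK (α⁻¹ • (a + b)) (α⁻¹ • a)
        have hv : α⁻¹ • (a + b) - α⁻¹ • a = α⁻¹ • b := by module
        rw [hv, norm_smul, Real.norm_eq_abs] at hlip
        have hm := mul_le_mul_of_nonneg_left hlip (abs_nonneg α)
        have habs : |α| * (|α⁻¹| * ‖b‖) = ‖b‖ := by
          rw [abs_inv]; field_simp
        nlinarith [abs_nonneg α]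
      · by_cases hγ : α + β = 0
        · have hβα : β = -α := by linarith
          simp only [katetovSeminorm, Prod.fst_add, Prod.snd_add]
          rw [if_pos hγ, if_neg hα, if_neg hβ]
          have hd := kat_dist hK (α⁻¹ • a) (β⁻¹ • b)
          have hvec : α⁻¹ • a - β⁻¹ • b = α⁻¹ • (a + b) := by
            rw [hβα, inv_neg, neg_smul, sub_neg_eq_add, ← smul_add]
          rw [hvec, norm_smul, Real.norm_eq_abs, abs_inv] at hd
          have h := mul_le_mul_of_nonneg_left hd (abs_nonneg α)
          have habs : |α| * (|α|⁻¹ * ‖a + b‖) = ‖a + b‖ := by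
            have : |α| ≠ 0 := abs_ne_zero.mpr hα
            field_simp
          rw [habs] at h
          have hba : |β| = |α| := by rw [hβα, abs_neg]
          rw [hba]
          linarith [h]
        · simp only [katetovSeminorm, Prod.fst_add, Prod.snd_add]
          rw [if_neg hγ, if_neg hα, if_neg hβ]
          exact key hK hC hα hβ hγ a b
  · intro a
    simp [katetovSeminorm]
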